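/- Let $Z_1, Z_2, Z_3$ be mutually independent standard normal random variables, $c = \Phi^{-1}(1-\alpha)$ for $\alpha \in (0,1)$, $c' \in \mathbb{R}$, and let $0 < w_1 \le w_2 < 1$. Define the random variable $S = \sqrt{w_1}\,Z_1 + \sqrt{1-w_1}\,Z_2$ on the event $\{Z_1 \ge Z_3 + c'\}$ and $S = \sqrt{w_2}\,Z_1 + \sqrt{1-w_2}\,Z_2$ on the complementary event $\{Z_1 < Z_3 + c'\}$. Then $P(S > c) \le \alpha$. -/

import Mathlib

open MeasureTheory ProbabilityTheory Real
open scoped ENNReal NNReal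

namespace RABR


lemma map_withDensity_equiv {α β : Type*} [MeasurableSpace α] [MeasurableSpace β]
    (e : α ≃ᵐ β) (m : Measure α) (f : β → ℝ≥0∞) (hf : Measurable f) :
    Measure.map e (m.withDensity (fun a => f (e a))) = (Measure.map e m).withDensity f := by
  ext s hs
  rw [Measure.map_apply e.measurable hs, withDensity_apply _ (e.measurable hs),
    withDensity_apply _ hs, MeasureTheory.setLIntegral_map hs hf e.measurable]

lemma gauss2d :
    (gaussianReal 0 1).prod (gaussianReal 0 1)
      = (volume : Measure (ℝ × ℝ)).withDensity
          (fun p => gaussianPDF 0 1 p.1 * gaussianPDF 0 1 p.2) := by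
  refine Measure.prod_eq (fun s t hs ht => ?_)
  rw [withDensity_apply _ (hs.prod ht), Measure.volume_eq_prod, ← Measure.prod_restrict,
    lintegral_prod_mul (measurable_gaussianPDF 0 1).aemeasurable
      (measurable_gaussianPDF 0 1).aemeasurable,
    ← gaussianReal_apply 0 one_ne_zero s, ← gaussianReal_apply 0 one_ne_zero t]



lemma gauss2d_rot {a b : ℝ} (hab : a^2 + b^2 = 1) :
    Measure.map (fun p : ℝ × ℝ => (a*p.1 + b*p.2, b*p.1 - a*p.2))
      ((gaussianReal 0 1).prod (gaussianReal 0 1))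
      = (gaussianReal 0 1).prod (gaussianReal 0 1) := by
  set L : ℝ × ℝ → ℝ × ℝ := fun p => (a*p.1 + b*p.2, b*p.1 - a*p.2) with hL
  have hinv : ∀ p : ℝ × ℝ, L (L p) = p := by
    intro p
    simp only [hL]
    ext
    · simp only; linear_combination p.1 * hab
    · simp only; linear_combination p.2 * hab
  have hLm : Measurable L := by fun_prop
  let e : ℝ × ℝ ≃ᵐ ℝ × ℝ :=
    { toFun := L, invFun := L, left_inv := hinv, right_inv := hinv,
      measurable_toFun := hLm, measurable_invFun := hLm }
  have hdet : LinearMap.det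
      (Matrix.toLin (Module.Basis.finTwoProd ℝ) (Module.Basis.finTwoProd ℝ) !![a, b; b, -a]) = -1 := by
    rw [LinearMap.det_toLin]
    rw [Matrix.det_fin_two_of]
    linear_combination -hab
  have hvol : Measure.map L (volume : Measure (ℝ × ℝ)) = volume := by
    have h := Measure.map_linearMap_addHaar_eq_smul_addHaar (volume : Measure (ℝ × ℝ))
      (f := Matrix.toLin (Module.Basis.finTwoProd ℝ) (Module.Basis.finTwoProd ℝ) !![a, b; b, -a])
      (by rw [hdet]; norm_num)
    have hfun : ⇑(Matrix.toLin (Module.Basis.finTwoProd ℝ) (Module.Basis.finTwoProd ℝ) !![a, b; b, -a]) = L := by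
      funext p
      rw [Matrix.toLin_finTwoProd_apply]
      simp [hL]; ring
    rw [hfun, hdet] at h
    norm_num at h
    exact h
  have hreal : ∀ x y : ℝ, gaussianPDFReal 0 1 (a*x+b*y) * gaussianPDFReal 0 1 (b*x - a*y)
      = gaussianPDFReal 0 1 x * gaussianPDFReal 0 1 y := by
    intro x y
    have hexp : (-(a*x+b*y)^2/(2:ℝ)) + (-(b*x-a*y)^2/2) = -x^2/2 + -y^2/2 := by
      linear_combination (-(x^2+y^2)/2) * hab
    simp only [gaussianPDFReal, sub_zero, NNReal.coe_one, mul_one]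
    rw [mul_mul_mul_comm, ← Real.exp_add, hexp, Real.exp_add, ← mul_mul_mul_comm]
  set F : ℝ × ℝ → ℝ≥0∞ := fun p => gaussianPDF 0 1 p.1 * gaussianPDF 0 1 p.2 with hFdef
  have hFmeas : Measurable F :=
    ((measurable_gaussianPDF 0 1).comp measurable_fst).mul
      ((measurable_gaussianPDF 0 1).comp measurable_snd)
  have hFL : ∀ p : ℝ × ℝ, F (e p) = F p := by
    intro p
    simp only [hFdef, gaussianPDF_def]
    show ENNReal.ofReal (gaussianPDFReal 0 1 (a*p.1+b*p.2)) *
        ENNReal.ofReal (gaussianPDFReal 0 1 (b*p.1-a*p.2)) = _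
    rw [← ENNReal.ofReal_mul (gaussianPDFReal_nonneg _ _ _), hreal,
      ENNReal.ofReal_mul (gaussianPDFReal_nonneg _ _ _)]
  have : Measure.map L ((gaussianReal 0 1).prod (gaussianReal 0 1))
      = Measure.map e (volume.withDensity (fun p => F (e p))) := by
    rw [gauss2d]
    have harr : (fun p : ℝ × ℝ => gaussianPDF 0 1 p.1 * gaussianPDF 0 1 p.2)
        = fun p => F (e p) := funext fun p => (hFL p).symm
    rw [harr]
    rfl
  rw [this, map_withDensity_equiv e volume F hFmeas]
  have hev : Measure.map (⇑e) (volume : Measure (ℝ × ℝ)) = volume := hvol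
  rw [hev, ← gauss2d]

lemma map_lin {a b : ℝ} (hab : a^2 + b^2 = 1) :
    Measure.map (fun p : ℝ × ℝ => a*p.1 + b*p.2) ((gaussianReal 0 1).prod (gaussianReal 0 1))
      = gaussianReal 0 1 := by
  have hcomp : (fun p : ℝ × ℝ => a*p.1 + b*p.2)
      = Prod.fst ∘ (fun p : ℝ × ℝ => (a*p.1 + b*p.2, b*p.1 - a*p.2)) := rfl
  rw [hcomp, ← Measure.map_map measurable_fst (by fun_prop), gauss2d_rot hab,
    Measure.map_fst_prod]
  simp

/-- Reflection coefficients swapping the two unit vectors `(s1,t1)` and `(s2,t2)`. -/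
lemma reflection_coeffs {s1 t1 s2 t2 : ℝ} (h1 : s1^2 + t1^2 = 1) (h2 : s2^2 + t2^2 = 1)
    (hs : s1 < s2) :
    ∃ a b : ℝ, a^2 + b^2 = 1
      ∧ (∀ x y : ℝ, s1*(a*x+b*y) + t1*(b*x - a*y) = s2*x + t2*y)
      ∧ (∀ x y : ℝ, s2*(a*x+b*y) + t2*(b*x - a*y) = s1*x + t1*y)
      ∧ (∀ x y : ℝ, (s1-s2)*x + (t1-t2)*y ≤ 0 → a*x + b*y ≤ x) := by
  have hd2pos : (0:ℝ) < (s1-s2)^2 + (t1-t2)^2 := by nlinarith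
  have hd2ne : (s1-s2)^2 + (t1-t2)^2 ≠ 0 := ne_of_gt hd2pos
  refine ⟨((t1-t2)^2 - (s1-s2)^2)/((s1-s2)^2 + (t1-t2)^2),
    -(2*(s1-s2)*(t1-t2))/((s1-s2)^2 + (t1-t2)^2), ?_, ?_, ?_, ?_⟩
  · rw [div_pow, neg_div, neg_sq, div_pow, ← add_div]
    rw [show (((t1-t2)^2 - (s1-s2)^2)^2 + (2*(s1-s2)*(t1-t2))^2 : ℝ)
      = ((s1-s2)^2 + (t1-t2)^2)^2 by ring]
    exact div_self (pow_ne_zero 2 hd2ne)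
  · intro x y
    have hcl : s1*((((t1-t2)^2 - (s1-s2)^2))*x + (-(2*(s1-s2)*(t1-t2)))*y)
        + t1*((-(2*(s1-s2)*(t1-t2)))*x - (((t1-t2)^2 - (s1-s2)^2))*y)
        = (s2*x + t2*y) * ((s1-s2)^2 + (t1-t2)^2) := by
      linear_combination (-((s1-s2)*x + (t1-t2)*y)) * (h1 - h2)
    calc s1*(((t1-t2)^2 - (s1-s2)^2)/((s1-s2)^2 + (t1-t2)^2)*x
          + -(2*(s1-s2)*(t1-t2))/((s1-s2)^2 + (t1-t2)^2)*y)
        + t1*(-(2*(s1-s2)*(t1-t2))/((s1-s2)^2 + (t1-t2)^2)*x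
          - ((t1-t2)^2 - (s1-s2)^2)/((s1-s2)^2 + (t1-t2)^2)*y)
        = (s1*((((t1-t2)^2 - (s1-s2)^2))*x + (-(2*(s1-s2)*(t1-t2)))*y)
          + t1*((-(2*(s1-s2)*(t1-t2)))*x - (((t1-t2)^2 - (s1-s2)^2))*y))
            / ((s1-s2)^2 + (t1-t2)^2) := by ring
      _ = ((s2*x + t2*y) * ((s1-s2)^2 + (t1-t2)^2)) / ((s1-s2)^2 + (t1-t2)^2) := by rw [hcl]
      _ = s2*x + t2*y := mul_div_cancel_right₀ _ hd2ne
  · intro x y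
    have hcl : s2*((((t1-t2)^2 - (s1-s2)^2))*x + (-(2*(s1-s2)*(t1-t2)))*y)
        + t2*((-(2*(s1-s2)*(t1-t2)))*x - (((t1-t2)^2 - (s1-s2)^2))*y)
        = (s1*x + t1*y) * ((s1-s2)^2 + (t1-t2)^2) := by
      linear_combination (-((s1-s2)*x + (t1-t2)*y)) * (h1 - h2)
    calc s2*(((t1-t2)^2 - (s1-s2)^2)/((s1-s2)^2 + (t1-t2)^2)*x
          + -(2*(s1-s2)*(t1-t2))/((s1-s2)^2 + (t1-t2)^2)*y)
        + t2*(-(2*(s1-s2)*(t1-t2))/((s1-s2)^2 + (t1-t2)^2)*x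
          - ((t1-t2)^2 - (s1-s2)^2)/((s1-s2)^2 + (t1-t2)^2)*y)
        = (s2*((((t1-t2)^2 - (s1-s2)^2))*x + (-(2*(s1-s2)*(t1-t2)))*y)
          + t2*((-(2*(s1-s2)*(t1-t2)))*x - (((t1-t2)^2 - (s1-s2)^2))*y))
            / ((s1-s2)^2 + (t1-t2)^2) := by ring
      _ = ((s1*x + t1*y) * ((s1-s2)^2 + (t1-t2)^2)) / ((s1-s2)^2 + (t1-t2)^2) := by rw [hcl]
      _ = s1*x + t1*y := mul_div_cancel_right₀ _ hd2ne
  · intro x y hxy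
    have hrw : ((t1-t2)^2 - (s1-s2)^2)/((s1-s2)^2 + (t1-t2)^2)*x
        + -(2*(s1-s2)*(t1-t2))/((s1-s2)^2 + (t1-t2)^2)*y
        = ((((t1-t2)^2 - (s1-s2)^2))*x + (-(2*(s1-s2)*(t1-t2)))*y)
            / ((s1-s2)^2 + (t1-t2)^2) := by ring
    rw [hrw, div_le_iff₀ hd2pos]
    have hkey : 0 ≤ (2*(s2-s1)) * (-((s1-s2)*x + (t1-t2)*y)) :=
      mul_nonneg (by linarith) (by linarith)
    nlinarith [hkey]

end RABR

open RABR

/-- The standard normal cumulative distribution function `Φ`. -/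
noncomputable def stdNormalCDF (x : ℝ) : ℝ := ((gaussianReal 0 1) (Set.Iic x)).toReal

/-- Theorem 1 (core): the adaptively weighted statistic, which uses the smaller
weight `w₁` exactly on the selection event `{Z₁ ≥ Z₃ + c'}` and the larger weight
`w₂` otherwise, crosses `c = Φ⁻¹(1-α)` with probability at most `α`. -/
theorem rabr_type_I_error {Ω : Type*} [MeasurableSpace Ω]
    (μ : Measure Ω) [IsProbabilityMeasure μ]
    (Z1 Z2 Z3 : Ω → ℝ) (hZm : ∀ i, Measurable (![Z1, Z2, Z3] i))
    (hZ : ∀ i, μ.map (![Z1, Z2, Z3] i) = gaussianReal 0 1)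
    (hindep : iIndepFun ![Z1, Z2, Z3] μ)
    (α c c' : ℝ) (hα : α ∈ Set.Ioo (0 : ℝ) 1) (hc : stdNormalCDF c = 1 - α)
    (w1 w2 : ℝ) (hw1 : 0 < w1) (hw12 : w1 ≤ w2) (hw2 : w2 < 1)
    (S : Ω → ℝ)
    (hS : ∀ ω, S ω = if Z1 ω ≥ Z3 ω + c' then
        Real.sqrt w1 * Z1 ω + Real.sqrt (1 - w1) * Z2 ω
      else Real.sqrt w2 * Z1 ω + Real.sqrt (1 - w2) * Z2 ω) :
    (μ {ω | S ω > c}).toReal ≤ α := by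
  obtain ⟨hα0, hα1⟩ := hα
  have hZ1m : Measurable Z1 := by simpa using hZm 0
  have hZ2m : Measurable Z2 := by simpa using hZm 1
  have hZ3m : Measurable Z3 := by simpa using hZm 2
  have hZ3 : μ.map Z3 = gaussianReal 0 1 := by simpa using hZ 2
  -- weights
  set s1 : ℝ := Real.sqrt w1 with hs1def
  set t1 : ℝ := Real.sqrt (1 - w1) with ht1def
  set s2 : ℝ := Real.sqrt w2 with hs2def
  set t2 : ℝ := Real.sqrt (1 - w2) with ht2def
  have h11 : s1^2 + t1^2 = 1 := by
    rw [hs1def, ht1def, Real.sq_sqrt hw1.le, Real.sq_sqrt (by linarith)]; ring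
  have h22 : s2^2 + t2^2 = 1 := by
    rw [hs2def, ht2def, Real.sq_sqrt (by linarith), Real.sq_sqrt (by linarith)]; ring
  -- joint law
  set G : Measure ℝ := gaussianReal 0 1 with hGdef
  set m : Measure ((ℝ × ℝ) × ℝ) := (G.prod G).prod G with hmdef
  have hpair : μ.map (fun ω => (Z1 ω, Z2 ω)) = G.prod G := by
    have h12 : IndepFun Z1 Z2 μ := by
      have := hindep.indepFun (show (0:Fin 3) ≠ 1 by decide)
      simpa using this
    rw [(indepFun_iff_map_prod_eq_prod_map_map hZ1m.aemeasurable hZ2m.aemeasurable).mp h12]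
    have e1 : μ.map Z1 = G := by simpa using hZ 0
    have e2 : μ.map Z2 = G := by simpa using hZ 1
    rw [e1, e2]
  set V : Ω → (ℝ × ℝ) × ℝ := fun ω => ((Z1 ω, Z2 ω), Z3 ω) with hVdef
  have hVm : Measurable V := ((hZ1m.prodMk hZ2m).prodMk hZ3m)
  have hmapV : μ.map V = m := by
    have h123 : IndepFun (fun ω => (Z1 ω, Z2 ω)) Z3 μ := by
      have := hindep.indepFun_prodMk hZm 0 1 2 (by decide) (by decide)
      simpa using this
    rw [hVdef, (indepFun_iff_map_prod_eq_prod_map_map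
      (hZ1m.prodMk hZ2m).aemeasurable hZ3m.aemeasurable).mp h123, hpair, hZ3]
  -- sets
  set A : Set ((ℝ × ℝ) × ℝ) := {w | w.2 + c' ≤ w.1.1} with hAdef
  set B1 : Set ((ℝ × ℝ) × ℝ) := {w | c < s1 * w.1.1 + t1 * w.1.2} with hB1def
  set B2 : Set ((ℝ × ℝ) × ℝ) := {w | c < s2 * w.1.1 + t2 * w.1.2} with hB2def
  have hAm : MeasurableSet A := measurableSet_le (by fun_prop) (by fun_prop)
  have hB1m : MeasurableSet B1 := measurableSet_lt (by fun_prop) (by fun_prop)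
  have hB2m : MeasurableSet B2 := measurableSet_lt (by fun_prop) (by fun_prop)
  set E : Set ((ℝ × ℝ) × ℝ) := (A ∩ B1) ∪ (Aᶜ ∩ B2) with hEdef
  have hEm : MeasurableSet E := ((hAm.inter hB1m).union (hAm.compl.inter hB2m))
  have hpre : {ω | S ω > c} = V ⁻¹' E := by
    ext ω
    simp only [Set.mem_setOf_eq, hS ω, Set.mem_preimage, hEdef, Set.mem_union,
      Set.mem_inter_iff, Set.mem_compl_iff, hAdef, hB1def, hB2def, hVdef]
    by_cases h : Z1 ω ≥ Z3 ω + c'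
    · simp only [if_pos h]
      constructor
      · intro hgt; exact Or.inl ⟨h, hgt⟩
      · rintro (⟨-, hgt⟩ | ⟨hna, -⟩)
        · exact hgt
        · exact absurd h hna
    · simp only [if_neg h]
      constructor
      · intro hgt; exact Or.inr ⟨h, hgt⟩
      · rintro (⟨ha, -⟩ | ⟨-, hgt⟩)
        · exact absurd ha h
        · exact hgt
  have hmuE : μ {ω | S ω > c} = m E := by
    rw [hpre, ← hmapV, Measure.map_apply hVm hEm]
  -- key comparison
  have key : m (A ∩ B1) ≤ m (A ∩ B2) := by
    rcases eq_or_lt_of_le hw12 with heq | hlt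
    · subst heq
      have hBB : B1 = B2 := by
        rw [hB1def, hB2def, hs1def, hs2def, ht1def, ht2def]
      rw [hBB]
    · have hs12 : s1 < s2 := by
        rw [hs1def, hs2def]
        exact Real.sqrt_lt_sqrt hw1.le hlt
      obtain ⟨a, b, hab, hswap1, hswap2, hmono⟩ := reflection_coeffs h11 h22 hs12
      set L : ℝ × ℝ → ℝ × ℝ := fun p => (a*p.1 + b*p.2, b*p.1 - a*p.2) with hLdef
      have hLpres : MeasurePreserving L (G.prod G) (G.prod G) :=
        ⟨by fun_prop, gauss2d_rot hab⟩
      have hMpres : MeasurePreserving (Prod.map L (id : ℝ → ℝ)) m m :=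
        hLpres.prod (MeasurePreserving.id G)
      -- splitting
      have hsplit1 : m (A ∩ B1) = m (A ∩ B1 ∩ B2) + m ((A ∩ B1) \ B2) :=
        (measure_inter_add_diff _ hB2m).symm
      have hsplit2 : m (A ∩ B2) = m (A ∩ B2 ∩ B1) + m ((A ∩ B2) \ B1) :=
        (measure_inter_add_diff _ hB1m).symm
      have hcomm : A ∩ B1 ∩ B2 = A ∩ B2 ∩ B1 := by
        rw [Set.inter_right_comm]
      have hkey2 : m ((A ∩ B1) \ B2) ≤ m ((A ∩ B2) \ B1) := by
        have hms : MeasurableSet ((A ∩ B1) \ B2) := (hAm.inter hB1m).diff hB2m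
        have hpreim : m ((A ∩ B1) \ B2)
            = m ((Prod.map L (id : ℝ → ℝ)) ⁻¹' ((A ∩ B1) \ B2)) :=
          (hMpres.measure_preimage hms.nullMeasurableSet).symm
        rw [hpreim]
        refine measure_mono ?_
        intro w hw
        obtain ⟨⟨hwA, hwB1⟩, hwB2⟩ := hw
        -- unfold the preimage membership
        have hx1 : (Prod.map L (id : ℝ → ℝ)) w ∈ A := hwA
        have hx2 : (Prod.map L (id : ℝ → ℝ)) w ∈ B1 := hwB1
        have hx3 : (Prod.map L (id : ℝ → ℝ)) w ∉ B2 := hwB2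
        have hA' : w.2 + c' ≤ a*w.1.1 + b*w.1.2 := hx1
        have hB1' : c < s1*(a*w.1.1 + b*w.1.2) + t1*(b*w.1.1 - a*w.1.2) := hx2
        have hB2' : ¬ c < s2*(a*w.1.1 + b*w.1.2) + t2*(b*w.1.1 - a*w.1.2) := hx3
        rw [hswap1] at hB1'
        rw [hswap2] at hB2'
        -- so w ∈ B2, w ∉ B1
        have hwInB2 : w ∈ B2 := hB1'
        have hwNotB1 : w ∉ B1 := hB2'
        -- T1 ≤ T2 at w
        have hT12 : (s1-s2)*w.1.1 + (t1-t2)*w.1.2 ≤ 0 := by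
          have h1' : ¬ c < s1 * w.1.1 + t1 * w.1.2 := hwNotB1
          push_neg at h1'
          have h2' : c < s2 * w.1.1 + t2 * w.1.2 := hwInB2
          nlinarith
        have hle : a*w.1.1 + b*w.1.2 ≤ w.1.1 := hmono _ _ hT12
        exact ⟨⟨le_trans hA' hle, hwInB2⟩, hwNotB1⟩
      calc m (A ∩ B1) = m (A ∩ B1 ∩ B2) + m ((A ∩ B1) \ B2) := hsplit1
        _ = m (A ∩ B2 ∩ B1) + m ((A ∩ B1) \ B2) := by rw [hcomm]
        _ ≤ m (A ∩ B2 ∩ B1) + m ((A ∩ B2) \ B1) := add_le_add_right hkey2 _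
        _ = m (A ∩ B2) := hsplit2.symm
  -- B2 has measure α
  have hB2val : m B2 = ENNReal.ofReal α := by
    have hBpre : B2 = (fun w : (ℝ × ℝ) × ℝ => s2 * w.1.1 + t2 * w.1.2) ⁻¹' (Set.Ioi c) := rfl
    have hmapT : Measure.map (fun w : (ℝ × ℝ) × ℝ => s2 * w.1.1 + t2 * w.1.2) m
        = gaussianReal 0 1 := by
      have hcomp : (fun w : (ℝ × ℝ) × ℝ => s2 * w.1.1 + t2 * w.1.2)
          = (fun p : ℝ × ℝ => s2 * p.1 + t2 * p.2) ∘ Prod.fst := rfl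
      rw [hmdef, hcomp, ← Measure.map_map (by fun_prop) measurable_fst,
        Measure.map_fst_prod]
      simp only [measure_univ, one_smul]
      exact map_lin h22
    rw [hBpre, ← Measure.map_apply (by fun_prop) measurableSet_Ioi, hmapT]
    have hIic : gaussianReal 0 1 (Set.Iic c) = ENNReal.ofReal (1 - α) := by
      rw [← ENNReal.ofReal_toReal (measure_ne_top _ _)]
      exact congrArg ENNReal.ofReal hc
    have hcompl : gaussianReal 0 1 (Set.Ioi c) = 1 - gaussianReal 0 1 (Set.Iic c) := by
      rw [← Set.compl_Iic, measure_compl measurableSet_Iic (measure_ne_top _ _), measure_univ]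
    rw [hcompl, hIic, ← ENNReal.ofReal_one, ← ENNReal.ofReal_sub _ (by linarith)]
    norm_num
  -- conclude
  have hEleB2 : m E ≤ m B2 := by
    have h1 : m E ≤ m (A ∩ B1) + m (Aᶜ ∩ B2) := measure_union_le _ _
    have h2 : m ((A ∩ B2) ∪ (Aᶜ ∩ B2)) = m (A ∩ B2) + m (Aᶜ ∩ B2) :=
      measure_union (Disjoint.mono Set.inter_subset_left Set.inter_subset_left
        disjoint_compl_right) (hAm.compl.inter hB2m)
    have h3 : (A ∩ B2) ∪ (Aᶜ ∩ B2) = B2 := by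
      rw [Set.inter_comm A B2, Set.inter_comm Aᶜ B2, Set.inter_union_compl]
    calc m E ≤ m (A ∩ B1) + m (Aᶜ ∩ B2) := h1
      _ ≤ m (A ∩ B2) + m (Aᶜ ∩ B2) := add_le_add_left key _
      _ = m B2 := by rw [← h2, h3]
  rw [hmuE]
  calc (m E).toReal ≤ (m B2).toReal := by
        apply ENNReal.toReal_mono _ hEleB2
        rw [hB2val]; exact ENNReal.ofReal_ne_top
    _ = α := by rw [hB2val, ENNReal.toReal_ofReal hα0.le]
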